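/- Let f : R^d -> R^K agree with the affine map g(z) = Vz + a on a set Q whose interior contains x, with f_c(x) > f_s(x) for all s != c. Let d_B(x) denote the l_p-distance from x to the complement of Q. If d_B(x) <= d_D(x) := min_{s != c} |<V_c - V_s,x> + a_c - a_s| / ||V_c - V_s||_q, then for every delta with ||delta||_p < d_B(x), the point x + delta is also classified as class c, i.e. f_c(x+delta) > f_s(x+delta) for all s != c. -/

import Mathlib

open scoped BigOperators ENNReal

/-- The `l_p` norm of a vector in `ℝ^d`. -/
noncomputable def pnorm (p : ℝ≥0∞) {d : ℕ} (x : Fin d → ℝ) : ℝ :=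
  ‖(WithLp.equiv p (Fin d → ℝ)).symm x‖

/-- Standard inner product on `ℝ^d`. -/
noncomputable def dotp {d : ℕ} (w x : Fin d → ℝ) : ℝ := ∑ i, w i * x i

lemma pnorm_nonneg (p : ℝ≥0∞) (hp : 1 ≤ p) {d : ℕ} (x : Fin d → ℝ) : 0 ≤ pnorm p x := by
  haveI : Fact (1 ≤ p) := ⟨hp⟩
  exact norm_nonneg ((WithLp.equiv p (Fin d → ℝ)).symm x)

lemma pnorm_neg (p : ℝ≥0∞) (hp : 1 ≤ p) {d : ℕ} (x : Fin d → ℝ) : pnorm p (-x) = pnorm p x := by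
  haveI : Fact (1 ≤ p) := ⟨hp⟩
  unfold pnorm
  have h : (WithLp.equiv p (Fin d → ℝ)).symm (-x) = -((WithLp.equiv p (Fin d → ℝ)).symm x) := rfl
  rw [h]
  exact norm_neg ((WithLp.equiv p (Fin d → ℝ)).symm x)

lemma pnorm_one_eq {d : ℕ} (x : Fin d → ℝ) : pnorm 1 x = ∑ i, |x i| := by
  unfold pnorm
  rw [PiLp.norm_eq_sum (by norm_num)]
  simp [Real.norm_eq_abs]

lemma pnorm_top_apply_le {d : ℕ} (x : Fin d → ℝ) (i : Fin d) : |x i| ≤ pnorm ∞ x := by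
  unfold pnorm
  rw [PiLp.norm_eq_ciSup]
  exact le_ciSup (f := fun j => ‖(WithLp.equiv ∞ (Fin d → ℝ)).symm x j‖)
    (Set.Finite.bddAbove (Set.finite_range _)) i

lemma holder {d : ℕ} (p q : ℝ≥0∞) (hp : 1 ≤ p) (hpq : 1/p + 1/q = 1) (w v : Fin d → ℝ) :
    |dotp w v| ≤ pnorm q w * pnorm p v := by
  have hconj : ENNReal.HolderConjugate p q := ENNReal.holderConjugate_iff.mpr (by simpa [one_div] using hpq)
  have habs : |dotp w v| ≤ ∑ i, |w i| * |v i| := by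
    refine (Finset.abs_sum_le_sum_abs _ _).trans ?_
    simp [abs_mul]
  rcases eq_or_ne p ∞ with hptop | hptop
  · -- q = 1
    subst hptop
    have hq1 : q = 1 := by
      have := (ENNReal.HolderConjugate.eq_top_iff_eq_one ∞ q).mp rfl
      simpa using this
    subst hq1
    calc |dotp w v| ≤ ∑ i, |w i| * |v i| := habs
      _ ≤ ∑ i, |w i| * pnorm ∞ v := by
          refine Finset.sum_le_sum fun i _ => ?_
          exact mul_le_mul_of_nonneg_left (pnorm_top_apply_le v i) (abs_nonneg _)
      _ = pnorm 1 w * pnorm ∞ v := by rw [pnorm_one_eq, Finset.sum_mul]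
  rcases eq_or_ne p 1 with hp1 | hp1
  · subst hp1
    have hqtop : q = ∞ := by
      have := (ENNReal.HolderConjugate.eq_top_iff_eq_one q 1).mpr rfl
      simpa using this
    subst hqtop
    calc |dotp w v| ≤ ∑ i, |w i| * |v i| := habs
      _ ≤ ∑ i, pnorm ∞ w * |v i| := by
          refine Finset.sum_le_sum fun i _ => ?_
          exact mul_le_mul_of_nonneg_right (pnorm_top_apply_le w i) (abs_nonneg _)
      _ = pnorm ∞ w * pnorm 1 v := by rw [pnorm_one_eq, Finset.mul_sum]
  · -- 1 < p < ∞
    have hp0 : p ≠ 0 := ENNReal.HolderConjugate.ne_zero p q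
    have hq0 : q ≠ 0 := ENNReal.HolderConjugate.ne_zero q p
    have hqtop : q ≠ ∞ := by
      intro h
      apply hp1
      have : p⁻¹ = 1 := by
        have := (ENNReal.HolderConjugate.inv_add_inv_eq_one p q)
        simpa [h] using this
      simpa using congrArg (·⁻¹) this
    have hplt : 1 < p := lt_of_le_of_ne hp (Ne.symm hp1)
    have hptr : 1 < p.toReal := by
      rw [← ENNReal.toReal_one]
      exact (ENNReal.toReal_lt_toReal ENNReal.one_ne_top hptop).mpr hplt
    have hsum : p.toReal⁻¹ + q.toReal⁻¹ = 1 := by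
      have h := congrArg ENNReal.toReal (ENNReal.HolderConjugate.inv_add_inv_eq_one p q)
      rwa [ENNReal.toReal_add (by simp [hp0]) (by simp [hq0]), ENNReal.toReal_inv,
        ENNReal.toReal_inv, ENNReal.toReal_one] at h
    have hrc : Real.HolderConjugate p.toReal q.toReal := Real.holderConjugate_iff.mpr ⟨hptr, hsum⟩
    have key := Real.inner_le_Lp_mul_Lq (s := Finset.univ)
      (fun i => |w i|) (fun i => |v i|) hrc.symm
    simp only [abs_abs] at key
    have hwn : pnorm q w = (∑ i, |w i| ^ q.toReal) ^ (1 / q.toReal) := by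
      unfold pnorm
      rw [PiLp.norm_eq_sum (ENNReal.toReal_pos hq0 hqtop)]
      simp [Real.norm_eq_abs]
    have hvn : pnorm p v = (∑ i, |v i| ^ p.toReal) ^ (1 / p.toReal) := by
      unfold pnorm
      rw [PiLp.norm_eq_sum (ENNReal.toReal_pos hp0 hptop)]
      simp [Real.norm_eq_abs]
    calc |dotp w v| ≤ ∑ i, |w i| * |v i| := habs
      _ ≤ (∑ i, |w i| ^ q.toReal) ^ (1 / q.toReal) * (∑ i, |v i| ^ p.toReal) ^ (1 / p.toReal) := key
      _ = pnorm q w * pnorm p v := by rw [hwn, hvn]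

lemma pnorm_pos_of_ne_zero (q : ℝ≥0∞) (hq : 1 ≤ q) {d : ℕ} {w : Fin d → ℝ} (hw : w ≠ 0) :
    0 < pnorm q w := by
  haveI : Fact (1 ≤ q) := ⟨hq⟩
  unfold pnorm
  rw [norm_pos_iff]
  intro h
  exact hw ((WithLp.equiv q (Fin d → ℝ)).symm.injective (h.trans rfl))

lemma dotp_sub {d : ℕ} (u v x : Fin d → ℝ) : dotp (u - v) x = dotp u x - dotp v x := by
  simp [dotp, sub_mul, Finset.sum_sub_distrib]

lemma dotp_add_right {d : ℕ} (w x y : Fin d → ℝ) : dotp w (x + y) = dotp w x + dotp w y := by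
  simp [dotp, mul_add, Finset.sum_add_distrib]

/-- If d_B(x) ≤ d_D(x), every perturbation of l_p-norm < d_B(x) keeps the decision. -/
theorem stmt5 {d K : ℕ} (p q : ℝ≥0∞) (hp : 1 ≤ p) (hpq : 1/p + 1/q = 1)
    (f : (Fin d → ℝ) → Fin K → ℝ)
    (Q : Set (Fin d → ℝ)) (V : Fin K → Fin d → ℝ) (a : Fin K → ℝ)
    (hfQ : ∀ z ∈ Q, ∀ r : Fin K, f z r = dotp (V r) z + a r)
    (x : Fin d → ℝ) (hxQ : x ∈ interior Q) (c : Fin K)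
    (hc : ∀ s : Fin K, s ≠ c → f x s < f x c)
    (hV : ∀ s : Fin K, s ≠ c → V c ≠ V s)
    (dB dD : ℝ)
    (hdB : dB = sInf {r : ℝ | ∃ z ∈ Qᶜ, r = pnorm p (x - z)})
    (hdD : dD = sInf {r : ℝ | ∃ s : Fin K, s ≠ c ∧
        r = |dotp (V c - V s) x + (a c - a s)| / pnorm q (V c - V s)})
    (hBD : dB ≤ dD) :
    ∀ δ : Fin d → ℝ, pnorm p δ < dB →
      ∀ s : Fin K, s ≠ c → f (x + δ) s < f (x + δ) c := by
  have hconj : ENNReal.HolderConjugate p q := ENNReal.holderConjugate_iff.mpr (by simpa [one_div] using hpq)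
  have hq1 : 1 ≤ q := ENNReal.HolderConjugate.one_le q p
  intro δ hδ s hs
  have hxmem : x ∈ Q := interior_subset hxQ
  -- x + δ ∈ Q
  have hxdQ : x + δ ∈ Q := by
    by_contra hnot
    have hmem : pnorm p (x - (x + δ)) ∈ {r : ℝ | ∃ z ∈ Qᶜ, r = pnorm p (x - z)} :=
      ⟨x + δ, hnot, rfl⟩
    have hbdd : BddBelow {r : ℝ | ∃ z ∈ Qᶜ, r = pnorm p (x - z)} := by
      refine ⟨0, fun r hr => ?_⟩
      obtain ⟨z, _, rfl⟩ := hr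
      exact pnorm_nonneg p hp _
    have hle : dB ≤ pnorm p (x - (x + δ)) := hdB ▸ csInf_le hbdd hmem
    have heq : x - (x + δ) = -δ := by abel
    rw [heq, pnorm_neg p hp] at hle
    linarith
  set w : Fin d → ℝ := V c - V s with hw_def
  set m : ℝ := dotp w x + (a c - a s) with hm_def
  have hm : 0 < m := by
    have h1 := hc s hs
    rw [hfQ x hxmem s, hfQ x hxmem c] at h1
    have h2 : dotp w x = dotp (V c) x - dotp (V s) x := dotp_sub _ _ _
    rw [hm_def, h2]
    linarith
  have hw0 : w ≠ 0 := sub_ne_zero.mpr (hV s hs)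
  have hwpos : 0 < pnorm q w := pnorm_pos_of_ne_zero q hq1 hw0
  have hDle : dD ≤ |m| / pnorm q w := by
    rw [hdD]
    refine csInf_le ?_ ⟨s, hs, rfl⟩
    refine ⟨0, fun r hr => ?_⟩
    obtain ⟨t, _, rfl⟩ := hr
    exact div_nonneg (abs_nonneg _) (pnorm_nonneg q hq1 _)
  rw [abs_of_pos hm] at hDle
  have hkey : pnorm q w * pnorm p δ < m := by
    have h2 : pnorm p δ < m / pnorm q w := lt_of_lt_of_le hδ (hBD.trans hDle)
    have h3 := (lt_div_iff₀ hwpos).mp h2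
    linarith [h3]
  have hhold := holder p q hp hpq w δ
  have hdotlb : -m < dotp w δ := by
    have := neg_abs_le (dotp w δ)
    linarith
  rw [hfQ _ hxdQ s, hfQ _ hxdQ c]
  have e1 : dotp w (x + δ) = dotp w x + dotp w δ := dotp_add_right _ _ _
  have e3 : dotp w (x + δ) = dotp (V c) (x + δ) - dotp (V s) (x + δ) := dotp_sub _ _ _
  have hmx : m = dotp w x + (a c - a s) := hm_def
  linarith
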